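/- In the quantum Weyl algebra W_q, with A = v⁻¹u⁻¹ and B = u, the element C := A⁻¹B⁻¹A(1-A) equals q·uvu⁻¹v⁻¹u⁻¹v⁻¹u⁻¹vu, and in particular C is invertible in W_q. -/
import Mathlib


/-- Relations of the quantum Weyl algebra `W_q`: generators `u = 0`, `u⁻¹ = 1`,
`v = 2`, `v⁻¹ = 3`, with `u u⁻¹ = u⁻¹ u = v v⁻¹ = v⁻¹ v = 1` and `u v - q v u = 1`. -/
inductive WqRel (K : Type) [CommRing K] (q : K) :
    FreeAlgebra K (Fin 4) → FreeAlgebra K (Fin 4) → Prop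
  | uui : WqRel K q (FreeAlgebra.ι K 0 * FreeAlgebra.ι K 1) 1
  | uiu : WqRel K q (FreeAlgebra.ι K 1 * FreeAlgebra.ι K 0) 1
  | vvi : WqRel K q (FreeAlgebra.ι K 2 * FreeAlgebra.ι K 3) 1
  | viv : WqRel K q (FreeAlgebra.ι K 3 * FreeAlgebra.ι K 2) 1
  | weyl : WqRel K q (FreeAlgebra.ι K 0 * FreeAlgebra.ι K 2)
      (q • (FreeAlgebra.ι K 2 * FreeAlgebra.ι K 0) + 1)

/-- The quantum Weyl algebra `W_q`. -/
abbrev Wq (K : Type) [CommRing K] (q : K) : Type := RingQuot (WqRel K q)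

/-- The invertible generator `u` of `W_q`. -/
noncomputable def Wq.u (K : Type) [CommRing K] (q : K) : (Wq K q)ˣ where
  val := RingQuot.mkAlgHom K (WqRel K q) (FreeAlgebra.ι K 0)
  inv := RingQuot.mkAlgHom K (WqRel K q) (FreeAlgebra.ι K 1)
  val_inv := by rw [← map_mul, RingQuot.mkAlgHom_rel K WqRel.uui, map_one]
  inv_val := by rw [← map_mul, RingQuot.mkAlgHom_rel K WqRel.uiu, map_one]

/-- The invertible generator `v` of `W_q`. -/
noncomputable def Wq.v (K : Type) [CommRing K] (q : K) : (Wq K q)ˣ where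
  val := RingQuot.mkAlgHom K (WqRel K q) (FreeAlgebra.ι K 2)
  inv := RingQuot.mkAlgHom K (WqRel K q) (FreeAlgebra.ι K 3)
  val_inv := by rw [← map_mul, RingQuot.mkAlgHom_rel K WqRel.vvi, map_one]
  inv_val := by rw [← map_mul, RingQuot.mkAlgHom_rel K WqRel.viv, map_one]

/-- `A = v⁻¹ u⁻¹` as a unit of `W_q`. -/
noncomputable def Wq.A (K : Type) [CommRing K] (q : K) : (Wq K q)ˣ :=
  (Wq.v K q)⁻¹ * (Wq.u K q)⁻¹

/-- `B = u` as a unit of `W_q`. -/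
noncomputable def Wq.B (K : Type) [CommRing K] (q : K) : (Wq K q)ˣ := Wq.u K q

/-- In `W_q`, with `A = v⁻¹u⁻¹`, `B = u`, the element `C = A⁻¹B⁻¹A(1-A)` equals
`q • (u v u⁻¹ v⁻¹ u⁻¹ v⁻¹ u⁻¹ v u)`; in particular `C` is invertible in `W_q`. -/
theorem wq_C_eq_and_isUnit (K : Type) [CommRing K] (q : K) [Invertible q] :
    (((Wq.A K q)⁻¹ : (Wq K q)ˣ) : Wq K q) * ((Wq.B K q)⁻¹ : (Wq K q)ˣ) *
        (Wq.A K q : Wq K q) * (1 - (Wq.A K q : Wq K q)) =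
      q • ((Wq.u K q : Wq K q) * (Wq.v K q : Wq K q) *
        ((Wq.u K q)⁻¹ : (Wq K q)ˣ) * ((Wq.v K q)⁻¹ : (Wq K q)ˣ) *
        ((Wq.u K q)⁻¹ : (Wq K q)ˣ) * ((Wq.v K q)⁻¹ : (Wq K q)ˣ) *
        ((Wq.u K q)⁻¹ : (Wq K q)ˣ) * (Wq.v K q : Wq K q) * (Wq.u K q : Wq K q)) ∧
    IsUnit ((((Wq.A K q)⁻¹ : (Wq K q)ˣ) : Wq K q) * ((Wq.B K q)⁻¹ : (Wq K q)ˣ) *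
        (Wq.A K q : Wq K q) * (1 - (Wq.A K q : Wq K q))) := by
  set U : Wq K q := (Wq.u K q : Wq K q) with hU
  set V : Wq K q := (Wq.v K q : Wq K q) with hV
  set Ui : Wq K q := (((Wq.u K q)⁻¹ : (Wq K q)ˣ) : Wq K q) with hUi
  set Vi : Wq K q := (((Wq.v K q)⁻¹ : (Wq K q)ˣ) : Wq K q) with hVi
  have hUUi : U * Ui = 1 := (Wq.u K q).mul_inv
  have hUiU : Ui * U = 1 := (Wq.u K q).inv_mul
  have hVVi : V * Vi = 1 := (Wq.v K q).mul_inv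
  have hViV : Vi * V = 1 := (Wq.v K q).inv_mul
  have rel : U * V = q • (V * U) + 1 := by
    have := RingQuot.mkAlgHom_rel K (WqRel.weyl (K := K) (q := q))
    simpa [hU, hV, Wq.u, Wq.v, Units.val_inv_eq_inv_val] using this
  have hA : (Wq.A K q : Wq K q) = Vi * Ui := rfl
  have hAi : (((Wq.A K q)⁻¹ : (Wq K q)ˣ) : Wq K q) = U * V := by
    simp [Wq.A, hU, hV, mul_inv_rev]
  have hBi : (((Wq.B K q)⁻¹ : (Wq K q)ˣ) : Wq K q) = Ui := rfl
  have key : 1 - Vi * Ui = q • (Vi * Ui * V * U) := by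
    have h1 : Vi * Ui * (U * V) = 1 := by
      rw [(show Vi * Ui * (U * V) = Vi * (Ui * U) * V by noncomm_ring), hUiU, mul_one, hViV]
    have h2 : Vi * Ui * (U * V) = q • (Vi * Ui * V * U) + Vi * Ui := by
      rw [rel, mul_add, mul_one, mul_smul_comm]
      congr 1
      noncomm_ring
    rw [h1] at h2
    linear_combination (norm := abel) h2
  have heq : (((Wq.A K q)⁻¹ : (Wq K q)ˣ) : Wq K q) * ((Wq.B K q)⁻¹ : (Wq K q)ˣ) *
        (Wq.A K q : Wq K q) * (1 - (Wq.A K q : Wq K q)) =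
      q • (U * V * Ui * Vi * Ui * Vi * Ui * V * U) := by
    rw [hA, hAi, hBi, key, mul_smul_comm]
    congr 1
    noncomm_ring
  refine ⟨heq, ?_⟩
  rw [heq]
  have hq : IsUnit (algebraMap K (Wq K q) q) :=
    (isUnit_of_invertible q).map (algebraMap K (Wq K q))
  rw [Algebra.smul_def]
  exact hq.mul <| ((((((((Wq.u K q).isUnit.mul (Wq.v K q).isUnit).mul
    (Wq.u K q)⁻¹.isUnit).mul (Wq.v K q)⁻¹.isUnit).mul (Wq.u K q)⁻¹.isUnit).mul
    (Wq.v K q)⁻¹.isUnit).mul (Wq.u K q)⁻¹.isUnit).mul (Wq.v K q).isUnit).mul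
    (Wq.u K q).isUnit
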